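/- Let d ≥ 1, let f : ℝ^d → ℝ be differentiable and L-gradient Lipschitz with L > 0, let x ∈ ℝ^d, let ρ > 0, and let s be a Rademacher random vector in ℝ^d. Define the random step size α(s) = |f(x + ρs) − f(x − ρs)|/(2ρLd). Then E[min(f(x + α(s)s), f(x − α(s)s))] ≤ f(x) − ‖∇f(x)‖²/(4Ld) + (L d ρ²)/8. -/

import Mathlib

open scoped RealInnerProductSpace

/-- The vector in `ℝ^d` with `+1` in coordinates where `e` is `true`
and `-1` where `e` is `false`; a Rademacher random vector is uniform over these. -/
noncomputable def signVec {d : ℕ} (e : Fin d → Bool) : EuclideanSpace ℝ (Fin d) :=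
  WithLp.toLp 2 (fun i => if e i then 1 else -1)

lemma taylor_bound {d : ℕ} (f : EuclideanSpace ℝ (Fin d) → ℝ) (L : ℝ) (hL : 0 < L)
    (hdiff : Differentiable ℝ f)
    (hlip : ∀ x y : EuclideanSpace ℝ (Fin d), ‖gradient f x - gradient f y‖ ≤ L * ‖x - y‖)
    (x v : EuclideanSpace ℝ (Fin d)) :
    |f (x + v) - f x - ⟪gradient f x, v⟫| ≤ L / 2 * ‖v‖ ^ 2 := by
  have hφ : ∀ t : ℝ, HasDerivAt (fun t : ℝ => f (x + t • v)) ⟪gradient f (x + t • v), v⟫ t := by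
    intro t
    have hc : HasDerivAt (fun t : ℝ => x + t • v) v t := by
      simpa using ((hasDerivAt_id t).smul_const v).const_add x
    have hf := (hdiff (x + t • v)).hasGradientAt.hasFDerivAt
    exact (hf.comp_hasDerivAt t hc).congr_deriv (by simp [InnerProductSpace.toDual_apply_apply])
  have key : ∀ c : ℝ, |c| = 1 → c * (f (x + v) - f x - ⟪gradient f x, v⟫) ≤ L / 2 * ‖v‖ ^ 2 := by
    intro c hc
    set ψ : ℝ → ℝ := fun t =>
      c * (f (x + t • v) - t * ⟪gradient f x, v⟫) - L * ‖v‖ ^ 2 * t ^ 2 / 2 with hψdef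
    have hψd : ∀ t : ℝ, HasDerivAt ψ
        (c * ⟪gradient f (x + t • v) - gradient f x, v⟫ - L * ‖v‖ ^ 2 * t) t := by
      intro t
      have h1 : HasDerivAt (fun t : ℝ => f (x + t • v) - t * ⟪gradient f x, v⟫)
          (⟪gradient f (x + t • v), v⟫ - ⟪gradient f x, v⟫) t :=
        by exact ((hφ t).sub ((hasDerivAt_id' t).mul_const (⟪gradient f x, v⟫ : ℝ))).congr_deriv (by ring)
      have h2 : HasDerivAt (fun t : ℝ => L * ‖v‖ ^ 2 * t ^ 2 / 2)
          (L * ‖v‖ ^ 2 * (2 * t ^ 1) / 2) t :=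
        ((hasDerivAt_pow 2 t).const_mul (L * ‖v‖ ^ 2)).div_const 2
      have := (h1.const_mul c).sub h2
      exact this.congr_deriv (by rw [inner_sub_left]; ring)
    have hanti : AntitoneOn ψ (Set.Icc 0 1) := by
      apply antitoneOn_of_deriv_nonpos (convex_Icc 0 1)
      · exact (Differentiable.continuous fun t => (hψd t).differentiableAt).continuousOn
      · exact fun t _ => (hψd t).differentiableAt.differentiableWithinAt
      · intro t ht
        rw [interior_Icc] at ht
        rw [(hψd t).deriv]
        have hcs : c * ⟪gradient f (x + t • v) - gradient f x, v⟫ ≤ L * ‖v‖ ^ 2 * t := by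
          calc c * ⟪gradient f (x + t • v) - gradient f x, v⟫
              ≤ |c * ⟪gradient f (x + t • v) - gradient f x, v⟫| := le_abs_self _
            _ = |⟪gradient f (x + t • v) - gradient f x, v⟫| := by rw [abs_mul, hc, one_mul]
            _ ≤ ‖gradient f (x + t • v) - gradient f x‖ * ‖v‖ := abs_real_inner_le_norm _ _
            _ ≤ (L * ‖x + t • v - x‖) * ‖v‖ := by
                have := hlip (x + t • v) x
                nlinarith [norm_nonneg v]
            _ = L * ‖v‖ ^ 2 * t := by
                rw [add_sub_cancel_left, norm_smul, Real.norm_eq_abs,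
                  abs_of_nonneg ht.1.le]; ring
        linarith
    have h10 := hanti (Set.left_mem_Icc.2 zero_le_one) (Set.right_mem_Icc.2 zero_le_one)
      zero_le_one
    have e0 : ψ 0 = c * f x := by simp [hψdef]
    have e1 : ψ 1 = c * (f (x + v) - ⟪gradient f x, v⟫) - L * ‖v‖ ^ 2 / 2 := by
      simp [hψdef]
    rw [e0, e1] at h10
    nlinarith
  rw [abs_le]
  constructor
  · have := key (-1) (by simp); linarith
  · have := key 1 (by simp); linarith

lemma norm_signVec_sq {d : ℕ} (e : Fin d → Bool) : ‖signVec e‖ ^ 2 = (d : ℝ) := by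
  rw [← real_inner_self_eq_norm_sq]
  simp only [PiLp.inner_apply, RCLike.inner_apply, signVec, starRingEnd_apply, star_trivial]
  have : ∀ i : Fin d, (if e i then (1:ℝ) else -1) * (if e i then (1:ℝ) else -1) = 1 := by
    intro i; by_cases h : e i <;> simp [h]
  rw [Finset.sum_congr rfl fun i _ => this i]
  simp

lemma inner_signVec {d : ℕ} (g : EuclideanSpace ℝ (Fin d)) (e : Fin d → Bool) :
    ⟪g, signVec e⟫ = ∑ i, g i * (if e i then (1:ℝ) else -1) := by
  simp [PiLp.inner_apply, RCLike.inner_apply, signVec]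

lemma sum_sign_mul_sign {d : ℕ} (i j : Fin d) (hij : i ≠ j) :
    ∑ e : Fin d → Bool, (if e i then (1:ℝ) else -1) * (if e j then (1:ℝ) else -1) = 0 := by
  have hinv : Function.Involutive (fun e : Fin d → Bool => Function.update e i (!(e i))) := by
    intro e
    funext k
    by_cases h : k = i
    · subst h; simp
    · simp [Function.update_of_ne h]
  set T := hinv.toPerm
  have hT : ∀ e : Fin d → Bool,
      (if T e i then (1:ℝ) else -1) * (if T e j then (1:ℝ) else -1)
      = -((if e i then (1:ℝ) else -1) * (if e j then (1:ℝ) else -1)) := by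
    intro e
    have h1 : T e i = !(e i) := by simp [T, Function.Involutive.toPerm]
    have h2 : T e j = e j := by
      simp [T, Function.Involutive.toPerm, Function.update_of_ne (Ne.symm hij)]
    rw [h1, h2]
    by_cases h : e i <;> by_cases h' : e j <;> simp [h, h']
  have := Equiv.sum_comp T (fun e : Fin d → Bool =>
    (if e i then (1:ℝ) else -1) * (if e j then (1:ℝ) else -1))
  have h2 : ∑ e : Fin d → Bool, (if T e i then (1:ℝ) else -1) * (if T e j then (1:ℝ) else -1)
      = -∑ e : Fin d → Bool, (if e i then (1:ℝ) else -1) * (if e j then (1:ℝ) else -1) := by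
    rw [← Finset.sum_neg_distrib]
    exact Finset.sum_congr rfl fun e _ => hT e
  rw [h2] at this
  linarith

lemma sum_inner_sq {d : ℕ} (g : EuclideanSpace ℝ (Fin d)) :
    ∑ e : Fin d → Bool, ⟪g, signVec e⟫ ^ 2 = 2 ^ d * ‖g‖ ^ 2 := by
  have expand : ∀ e : Fin d → Bool, ⟪g, signVec e⟫ ^ 2
      = ∑ i, ∑ j, g i * g j * ((if e i then (1:ℝ) else -1) * (if e j then (1:ℝ) else -1)) := by
    intro e
    rw [inner_signVec, sq, Finset.sum_mul_sum]
    exact Finset.sum_congr rfl fun i _ => Finset.sum_congr rfl fun j _ => by ring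
  simp only [expand]
  rw [Finset.sum_comm]
  have swap : ∀ i : Fin d, ∑ e : Fin d → Bool,
      ∑ j, g i * g j * ((if e i then (1:ℝ) else -1) * (if e j then (1:ℝ) else -1))
      = (2:ℝ) ^ d * g i ^ 2 := by
    intro i
    rw [Finset.sum_comm]
    have : ∀ j : Fin d, ∑ e : Fin d → Bool,
        g i * g j * ((if e i then (1:ℝ) else -1) * (if e j then (1:ℝ) else -1))
        = if i = j then (2:ℝ) ^ d * g i ^ 2 else 0 := by
      intro j
      rw [← Finset.mul_sum]
      by_cases h : i = j
      · subst h
        simp only [if_pos rfl]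
        have : ∀ e : Fin d → Bool, (if e i then (1:ℝ) else -1) * (if e i then (1:ℝ) else -1) = 1 := by
          intro e; by_cases he : e i <;> simp [he]
        rw [Finset.sum_congr rfl fun e _ => this e]
        simp [Finset.card_univ]
        ring
      · rw [sum_sign_mul_sign i j h, mul_zero, if_neg h]
    rw [Finset.sum_congr rfl fun j _ => this j, Finset.sum_ite_eq Finset.univ i
      (fun _ => (2:ℝ) ^ d * g i ^ 2)]
    simp
  rw [Finset.sum_congr rfl fun i _ => swap i, ← Finset.mul_sum]
  congr 1
  rw [← real_inner_self_eq_norm_sq]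
  simp only [PiLp.inner_apply, RCLike.inner_apply, conj_trivial, sq]

set_option maxHeartbeats 1000000 in
lemma pointwise_bound {d : ℕ} (hd : 1 ≤ d) (f : EuclideanSpace ℝ (Fin d) → ℝ) (L : ℝ)
    (hL : 0 < L) (hdiff : Differentiable ℝ f)
    (hlip : ∀ x y : EuclideanSpace ℝ (Fin d), ‖gradient f x - gradient f y‖ ≤ L * ‖x - y‖)
    (x : EuclideanSpace ℝ (Fin d)) (ρ : ℝ) (hρ : 0 < ρ) (e : Fin d → Bool) :
    min (f (x + (|f (x + ρ • signVec e) - f (x - ρ • signVec e)| / (2 * ρ * L * d)) • signVec e))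
        (f (x - (|f (x + ρ • signVec e) - f (x - ρ • signVec e)| / (2 * ρ * L * d)) • signVec e))
      ≤ f x - ⟪gradient f x, signVec e⟫ ^ 2 / (2 * L * d) + L * d * ρ ^ 2 / 8 := by
  set s := signVec e with hs
  set a : ℝ := ⟪gradient f x, s⟫ with ha
  have hs2 : ‖s‖ ^ 2 = (d : ℝ) := norm_signVec_sq e
  have hdpos : (0 : ℝ) < d := by exact_mod_cast hd
  have hLd : (0 : ℝ) < L * d := by positivity
  set D : ℝ := f (x + ρ • s) - f (x - ρ • s) with hD
  set α : ℝ := |D| / (2 * ρ * L * d) with hα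
  have hα0 : 0 ≤ α := by positivity
  have hnorm : ∀ t : ℝ, ‖t • s‖ ^ 2 = t ^ 2 * d := by
    intro t; rw [norm_smul, Real.norm_eq_abs, mul_pow, sq_abs, hs2]
  have tb : ∀ t : ℝ, |f (x + t • s) - f x - t * a| ≤ L / 2 * (t ^ 2 * d) := by
    intro t
    have := taylor_bound f L hL hdiff hlip x (t • s)
    rwa [real_inner_smul_right, hnorm] at this
  have tbneg : ∀ t : ℝ, |f (x - t • s) - f x + t * a| ≤ L / 2 * (t ^ 2 * d) := by
    intro t
    have := taylor_bound f L hL hdiff hlip x (-(t • s))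
    rw [← sub_eq_add_neg, inner_neg_right, norm_neg, hnorm] at this
    rw [real_inner_smul_right] at this
    convert this using 2
    ring
  -- bound on |D - 2ρa|
  have hDa : |D - 2 * ρ * a| ≤ L * ρ ^ 2 * d := by
    have h1 := tb ρ
    have h2 := tbneg ρ
    rw [abs_le] at h1 h2 ⊢
    constructor <;> [nlinarith [h1.1, h2.2]; nlinarith [h1.2, h2.1]]
  -- key: (L d α - |a|)² ≤ (L d ρ / 2)²
  have hLdα : L * d * α = |D| / (2 * ρ) := by
    rw [hα]; field_simp
  have habs2 : abs (L * d * α - |a|) ≤ L * d * ρ / 2 := by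
    have h3 : abs (|D| - |2 * ρ * a|) ≤ |D - 2 * ρ * a| := abs_abs_sub_abs_le_abs_sub _ _
    have h4 : |2 * ρ * a| = 2 * ρ * |a| := by
      rw [abs_mul, abs_of_pos (by positivity : (0:ℝ) < 2 * ρ)]
    rw [h4] at h3
    have h5 : abs (|D| - 2 * ρ * |a|) ≤ L * ρ ^ 2 * d := le_trans h3 hDa
    rw [abs_le] at h5 ⊢
    have e1 : |D| / (2 * ρ) - |a| = (|D| - 2 * ρ * |a|) / (2 * ρ) := by field_simp
    constructor
    · rw [hLdα, e1, le_div_iff₀ (by positivity : (0:ℝ) < 2 * ρ)]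
      nlinarith [h5.1]
    · rw [hLdα, e1, div_le_iff₀ (by positivity : (0:ℝ) < 2 * ρ)]
      nlinarith [h5.2]
  have hkey : (L * d * α - |a|) ^ 2 ≤ (L * d * ρ / 2) ^ 2 := by
    rw [← sq_abs (L * d * α - |a|)]
    exact pow_le_pow_left₀ (abs_nonneg _) habs2 2
  -- min bound
  have hup : f (x + α • s) ≤ f x + α * a + L / 2 * (α ^ 2 * d) := by
    have := tb α; rw [abs_le] at this; linarith [this.2]
  have hdn : f (x - α • s) ≤ f x - α * a + L / 2 * (α ^ 2 * d) := by
    have := tbneg α; rw [abs_le] at this; linarith [this.2]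
  have hmin : min (f (x + α • s)) (f (x - α • s)) ≤ f x - α * |a| + L / 2 * (α ^ 2 * d) := by
    rcases abs_cases a with ⟨h, _⟩ | ⟨h, _⟩
    · exact le_trans (min_le_right _ _) (by rw [h]; linarith)
    · exact le_trans (min_le_left _ _) (by rw [h]; linarith)
  refine le_trans hmin ?_
  obtain ⟨b, hbdef⟩ : ∃ b : ℝ, b = |a| := ⟨_, rfl⟩
  rw [← hbdef] at hkey hmin ⊢
  have hb : a ^ 2 = b ^ 2 := by rw [hbdef, sq_abs]
  have hiden : -(α * b) + L / 2 * (α ^ 2 * d) + b ^ 2 / (2 * L * d) - L * d * ρ ^ 2 / 8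
      = ((L * d * α - b) ^ 2 - (L * d * ρ / 2) ^ 2) / (2 * L * d) := by
    field_simp
    ring
  have hneg : ((L * d * α - b) ^ 2 - (L * d * ρ / 2) ^ 2) / (2 * L * d) ≤ 0 :=
    div_nonpos_of_nonpos_of_nonneg (by linarith) (by positivity)
  rw [← hiden] at hneg
  have hdiv : a ^ 2 / (2 * L * ↑d) = b ^ 2 / (2 * L * ↑d) := by rw [hb]
  linarith [hneg, hdiv]

/-- one-step descent inequality of S2P with the dynamic step size
`α(s) = |f(x + ρs) − f(x − ρs)|/(2ρLd)` under general smoothness: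
`E[min(f(x + α(s)s), f(x − α(s)s))] ≤ f(x) − ‖∇f(x)‖²/(4Ld) + L d ρ²/8`,
the expectation being the uniform average over all `2^d` Rademacher vectors. -/
theorem stmt6 (d : ℕ) (hd : 1 ≤ d) (f : EuclideanSpace ℝ (Fin d) → ℝ) (L : ℝ) (hL : 0 < L)
    (hdiff : Differentiable ℝ f)
    (hlip : ∀ x y : EuclideanSpace ℝ (Fin d),
      ‖gradient f x - gradient f y‖ ≤ L * ‖x - y‖)
    (x : EuclideanSpace ℝ (Fin d)) (ρ : ℝ) (hρ : 0 < ρ) :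
    (∑ e : Fin d → Bool,
        min (f (x + (|f (x + ρ • signVec e) - f (x - ρ • signVec e)| / (2 * ρ * L * d)) • signVec e))
            (f (x - (|f (x + ρ • signVec e) - f (x - ρ • signVec e)| / (2 * ρ * L * d)) • signVec e)))
        / (2 : ℝ) ^ d
      ≤ f x - ‖gradient f x‖ ^ 2 / (4 * L * d) + L * d * ρ ^ 2 / 8 := by
  have hdpos : (0 : ℝ) < d := by exact_mod_cast hd
  have hLd : (0 : ℝ) < L * d := by positivity
  have h2d : (0 : ℝ) < 2 ^ d := by positivity
  set G : ℝ := ‖gradient f x‖ ^ 2 with hG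
  have hG0 : 0 ≤ G := by positivity
  have hsum : (∑ e : Fin d → Bool,
        min (f (x + (|f (x + ρ • signVec e) - f (x - ρ • signVec e)| / (2 * ρ * L * d)) • signVec e))
            (f (x - (|f (x + ρ • signVec e) - f (x - ρ • signVec e)| / (2 * ρ * L * d)) • signVec e)))
      ≤ ∑ e : Fin d → Bool,
          (f x - ⟪gradient f x, signVec e⟫ ^ 2 / (2 * L * d) + L * d * ρ ^ 2 / 8) :=
    Finset.sum_le_sum fun e _ => pointwise_bound hd f L hL hdiff hlip x ρ hρ e
  have heval : (∑ e : Fin d → Bool,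
        (f x - ⟪gradient f x, signVec e⟫ ^ 2 / (2 * L * d) + L * d * ρ ^ 2 / 8))
      = 2 ^ d * (f x + L * d * ρ ^ 2 / 8) - 2 ^ d * G / (2 * L * d) := by
    have step : ∀ e : Fin d → Bool,
        f x - ⟪gradient f x, signVec e⟫ ^ 2 / (2 * L * d) + L * d * ρ ^ 2 / 8
        = (f x + L * d * ρ ^ 2 / 8) - ⟪gradient f x, signVec e⟫ ^ 2 / (2 * L * d) := by
      intro e; ring
    rw [Finset.sum_congr rfl fun e _ => step e, Finset.sum_sub_distrib, Finset.sum_const,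
      ← Finset.sum_div, sum_inner_sq, Finset.card_univ]
    simp [Fintype.card_fun]
    ring
  rw [div_le_iff₀ h2d]
  have hfinal : 2 ^ d * (f x + L * d * ρ ^ 2 / 8) - 2 ^ d * G / (2 * L * d)
      ≤ (f x - G / (4 * L * ↑d) + L * ↑d * ρ ^ 2 / 8) * 2 ^ d := by
    have hdd : G / (4 * L * ↑d) ≤ G / (2 * L * ↑d) :=
      div_le_div_of_nonneg_left hG0 (by positivity) (by linarith)
    have : 2 ^ d * G / (2 * L * ↑d) = 2 ^ d * (G / (2 * L * ↑d)) := by ring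
    rw [this]
    nlinarith [h2d, hdd]
  linarith [le_trans hsum (le_of_eq heval), hfinal]
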